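/- arXiv:1812.00801 — 5 statements merged into one kernel-verified Lean document; each statement's English description precedes it below -/
import Mathlib

section
/- Let (B,X,⊲,⊲',*) be a shadow biquandle such that X is strongly connected, and define [x,y,z] = y*((x↘z) ⊲' (x↘y)) for x,y,z∈X. Then for any x,y,w∈X there exists a unique z∈X such that [x,y,z] = w. -/
/-- A biquandle: a set `B` with two binary operations `ut` (the under operation `⊲`)
and `ot` (the over operation `⊲'`) satisfying the biquandle axioms. -/
structure Biquandle (B : Type*) where
  ut : B → B → B
  ot : B → B → B
  diag : ∀ a, ut a a = ot a a
  ut_bij : ∀ b, Function.Bijective fun a => ut a b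
  ot_bij : ∀ b, Function.Bijective fun a => ot a b
  S_bij : Function.Bijective fun p : B × B => (ot p.2 p.1, ut p.1 p.2)
  ex1 : ∀ a b c, ut (ut a b) (ut c b) = ut (ut a c) (ot b c)
  ex2 : ∀ a b c, ot (ut a b) (ut c b) = ut (ot a c) (ot b c)
  ex3 : ∀ a b c, ot (ot a b) (ot c b) = ot (ot a c) (ut b c)

/-- The inverse `a ⊲⁻¹ b` of the bijection `·⊲b` of a biquandle. -/
noncomputable def Biquandle.utInv {B : Type*} (bq : Biquandle B) (a b : B) : B :=
  (Equiv.ofBijective _ (bq.ut_bij b)).symm a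

/-- The inverse `a ⊲'⁻¹ b` of the bijection `·⊲'b` of a biquandle. -/
noncomputable def Biquandle.otInv {B : Type*} (bq : Biquandle B) (a b : B) : B :=
  (Equiv.ofBijective _ (bq.ot_bij b)).symm a

/-- A `B`-set for a biquandle `bq` on `B`: a set `X` with an action `act = *`
such that each `·*a` is a bijection of `X` and `(x*a)*(b⊲'a) = (x*b)*(a⊲b)`. -/
structure BSet {B : Type*} (bq : Biquandle B) (X : Type*) where
  act : X → B → X
  act_bij : ∀ a, Function.Bijective fun x => act x a
  compat : ∀ x a b, act (act x a) (bq.ot b a) = act (act x b) (bq.ut a b)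

/-- The inverse `x *⁻¹ a` of the bijection `·*a` of a `B`-set. -/
noncomputable def BSet.actInv {B : Type*} {bq : Biquandle B} {X : Type*}
    (bs : BSet bq X) (x : X) (a : B) : X :=
  (Equiv.ofBijective _ (bs.act_bij a)).symm x

/-- A `B`-set is strongly connected if for each `x` the map `a ↦ x*a` is a bijection `B → X`. -/
def BSet.StronglyConnected {B : Type*} {bq : Biquandle B} {X : Type*} (bs : BSet bq X) : Prop :=
  ∀ x, Function.Bijective fun a => bs.act x a

/-- For a strongly connected `B`-set, `x ↘ y` is the unique `a ∈ B` with `x*a = y`. -/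
noncomputable def BSet.sd {B : Type*} {bq : Biquandle B} {X : Type*} (bs : BSet bq X)
    (h : bs.StronglyConnected) (x y : X) : B :=
  (Equiv.ofBijective _ (h x)).symm y

/-- The corresponding horizontal-tribracket of a shadow biquandle with strongly connected
`B`-set: `[x,y,z] = y*((x↘z) ⊲' (x↘y))`. -/
noncomputable def BSet.tribr {B X : Type*} {bq : Biquandle B} (bs : BSet bq X)
    (h : bs.StronglyConnected) (x y z : X) : X :=
  bs.act y (bq.ot (bs.sd h x z) (bs.sd h x y))

/-- Theorem 4.1, axiom (H1)(i): for the corresponding tribracket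
`[x,y,z] = y*((x↘z) ⊲' (x↘y))` of a shadow biquandle with strongly connected `X`,
for any `x y w ∈ X` there is a unique `z ∈ X` with `[x,y,z] = w`. -/
theorem shadow_biquandle_tribracket_H1i {B X : Type*} (bq : Biquandle B)
    (bs : BSet bq X) (h : bs.StronglyConnected) :
    ∀ x y w : X, ∃! z : X, bs.tribr h x y z = w := by
  intro x y w
  have hb : Function.Bijective (fun z => bs.tribr h x y z) := by
    have heq : (fun z => bs.tribr h x y z) =
        (fun a => bs.act y a) ∘ (fun a => bq.ot a (bs.sd h x y)) ∘
          (Equiv.ofBijective _ (h x)).symm := rfl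
    rw [heq]
    exact (h y).comp ((bq.ot_bij _).comp (Equiv.ofBijective _ (h x)).symm.bijective)
  obtain ⟨z, hz⟩ := hb.surjective w
  exact ⟨z, hz, fun z' hz' => hb.injective (hz'.trans hz.symm)⟩
end

section
/- Let (B,X,⊲,⊲',*) be a shadow biquandle such that X is strongly connected, and define [x,y,z] = y*((x↘z) ⊲' (x↘y)) for x,y,z∈X. Then for any x,z,w∈X there exists a unique y∈X such that [x,y,z] = w. -/
/-- Theorem 4.1, axiom (H1)(ii): for the corresponding tribracket
`[x,y,z] = y*((x↘z) ⊲' (x↘y))` of a shadow biquandle with strongly connected `X`,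
for any `x z w ∈ X` there is a unique `y ∈ X` with `[x,y,z] = w`. -/
theorem shadow_biquandle_tribracket_H1ii {B X : Type*} (bq : Biquandle B)
    (bs : BSet bq X) (h : bs.StronglyConnected) :
    ∀ x z w : X, ∃! y : X, bs.tribr h x y z = w := by
  intro x z w
  set c := bs.sd h x z with hc
  have hact_sd : ∀ (u : X) (v : X), bs.act u (bs.sd h u v) = v := fun u v =>
    (Equiv.ofBijective _ (h u)).apply_symm_apply v
  have hsd_act : ∀ (u : X) (a : B), bs.sd h u (bs.act u a) = a := fun u a =>
    (Equiv.ofBijective _ (h u)).symm_apply_apply a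
  have key : ∀ a : B, bs.tribr h x (bs.act x a) z = bs.act z (bq.ut a c) := by
    intro a
    unfold BSet.tribr
    rw [hsd_act, ← hc, bs.compat x a c, hact_sd]
  have hutc : ∀ d : B, bq.ut (bq.utInv d c) c = d := fun d =>
    (Equiv.ofBijective _ (bq.ut_bij c)).apply_symm_apply d
  refine ⟨bs.act x (bq.utInv (bs.sd h z w) c), ?_, ?_⟩
  · show bs.tribr h x (bs.act x (bq.utInv (bs.sd h z w) c)) z = w
    rw [key, hutc, hact_sd]
  · intro y hy
    have hy' : bs.act z (bq.ut (bs.sd h x y) c) = w := by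
      rw [← key, hact_sd]; exact hy
    have h1 : bq.ut (bs.sd h x y) c = bs.sd h z w := by
      apply (h z).1
      simpa using hy'.trans (hact_sd z w).symm
    have h2 : bs.sd h x y = bq.utInv (bs.sd h z w) c := by
      apply (bq.ut_bij c).1
      simpa using h1.trans (hutc (bs.sd h z w)).symm
    rw [← hact_sd x y, h2]
end

section
/- Let (B,X,⊲,⊲',*) be a shadow biquandle such that X is strongly connected, and define [x,y,z] = y*((x↘z) ⊲' (x↘y)) for x,y,z∈X. Then for any y,z,w∈X there exists a unique x∈X such that [x,y,z] = w. -/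
/-- Theorem 4.1, axiom (H1)(iii): for the corresponding tribracket
`[x,y,z] = y*((x↘z) ⊲' (x↘y))` of a shadow biquandle with strongly connected `X`,
for any `y z w ∈ X` there is a unique `x ∈ X` with `[x,y,z] = w`. -/
theorem shadow_biquandle_tribracket_H1iii {B X : Type*} (bq : Biquandle B)
    (bs : BSet bq X) (h : bs.StronglyConnected) :
    ∀ y z w : X, ∃! x : X, bs.tribr h x y z = w := by
  intro y z w
  -- basic facts about sd
  have hsd : ∀ x v : X, bs.act x (bs.sd h x v) = v := fun x v =>
    (Equiv.ofBijective _ (h x)).apply_symm_apply v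
  have hsd_eq : ∀ (x : X) (a : B) (v : X), bs.act x a = v → bs.sd h x v = a := by
    intro x a v hv
    apply (h x).1
    show bs.act x (bs.sd h x v) = bs.act x a
    rw [hsd, hv]
  -- construct x
  set c := bs.sd h y w with hc
  set d := bs.sd h z w with hd
  set p := (Equiv.ofBijective _ bq.S_bij).symm (c, d) with hp
  have hSp : bq.ot p.2 p.1 = c ∧ bq.ut p.1 p.2 = d := by
    have := (Equiv.ofBijective _ bq.S_bij).apply_symm_apply (c, d)
    exact ⟨congrArg Prod.fst this, congrArg Prod.snd this⟩
  set a := p.1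
  set b := p.2
  set x := bs.actInv y a with hx
  have hxa : bs.act x a = y :=
    (Equiv.ofBijective _ (bs.act_bij a)).apply_symm_apply y
  have hxb : bs.act x b = z := by
    apply (bs.act_bij (bq.ut a b)).1
    show bs.act (bs.act x b) (bq.ut a b) = bs.act z (bq.ut a b)
    rw [← bs.compat x a b, hxa, hSp.1, hSp.2, hsd, hsd]
  have hsxy : bs.sd h x y = a := hsd_eq x a y hxa
  have hsxz : bs.sd h x z = b := hsd_eq x b z hxb
  refine ⟨x, ?_, ?_⟩
  · show bs.act y (bq.ot (bs.sd h x z) (bs.sd h x y)) = w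
    rw [hsxy, hsxz, hSp.1, hsd]
  · intro x' hx'
    set a' := bs.sd h x' y with ha'
    set b' := bs.sd h x' z with hb'
    have h1 : bs.act y (bq.ot b' a') = w := hx'
    have h2 : bs.act z (bq.ut a' b') = w := by
      calc bs.act z (bq.ut a' b') = bs.act (bs.act x' b') (bq.ut a' b') := by rw [hsd]
        _ = bs.act (bs.act x' a') (bq.ot b' a') := (bs.compat x' a' b').symm
        _ = bs.act y (bq.ot b' a') := by rw [hsd]
        _ = w := hx'
    have hco : bq.ot b' a' = c := by
      apply (h y).1
      show bs.act y (bq.ot b' a') = bs.act y c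
      rw [h1, hsd]
    have hcu : bq.ut a' b' = d := by
      apply (h z).1
      show bs.act z (bq.ut a' b') = bs.act z d
      rw [h2, hsd]
    have hab : (a', b') = (a, b) := by
      apply bq.S_bij.1
      show (bq.ot b' a', bq.ut a' b') = (bq.ot b a, bq.ut a b)
      rw [hco, hcu, hSp.1, hSp.2]
    have ha : a' = a := congrArg Prod.fst hab
    apply (bs.act_bij a).1
    show bs.act x' a = bs.act x a
    rw [hxa, ← ha, ha']
    exact hsd x' y
end

section
/- Let (B,X,⊲,⊲',*) be a shadow biquandle such that X is strongly connected, and define [x,y,z] = y*((x↘z) ⊲' (x↘y)) for x,y,z∈X. Then for all x,y,z,w∈X: [y,[x,y,z],[x,y,w]] = [z,[x,y,z],[x,z,w]] = [w,[x,y,w],[x,z,w]]. -/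
lemma BSet.act_sd {B X : Type*} {bq : Biquandle B} (bs : BSet bq X)
    (h : bs.StronglyConnected) (x y : X) : bs.act x (bs.sd h x y) = y :=
  (Equiv.ofBijective _ (h x)).apply_symm_apply y

lemma BSet.sd_act {B X : Type*} {bq : Biquandle B} (bs : BSet bq X)
    (h : bs.StronglyConnected) (x : X) (a : B) : bs.sd h x (bs.act x a) = a :=
  (Equiv.ofBijective _ (h x)).symm_apply_apply a

/-- Theorem 4.1, axiom (H2): for the corresponding tribracket
`[x,y,z] = y*((x↘z) ⊲' (x↘y))` of a shadow biquandle with strongly connected `X`,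
`[y,[x,y,z],[x,y,w]] = [z,[x,y,z],[x,z,w]] = [w,[x,y,w],[x,z,w]]` for all `x y z w ∈ X`. -/
theorem shadow_biquandle_tribracket_H2 {B X : Type*} (bq : Biquandle B)
    (bs : BSet bq X) (h : bs.StronglyConnected) :
    ∀ x y z w : X,
      bs.tribr h y (bs.tribr h x y z) (bs.tribr h x y w)
        = bs.tribr h z (bs.tribr h x y z) (bs.tribr h x z w) ∧
      bs.tribr h z (bs.tribr h x y z) (bs.tribr h x z w)
        = bs.tribr h w (bs.tribr h x y w) (bs.tribr h x z w) := by
  intro x y z w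
  set a := bs.sd h x y with ha
  set b := bs.sd h x z with hb
  set c := bs.sd h x w with hc
  have hy : bs.act x a = y := bs.act_sd h x y
  have hz : bs.act x b = z := bs.act_sd h x z
  have hw : bs.act x c = w := bs.act_sd h x w
  have txyz : bs.tribr h x y z = bs.act y (bq.ot b a) := rfl
  have txyw : bs.tribr h x y w = bs.act y (bq.ot c a) := rfl
  have txzw : bs.tribr h x z w = bs.act z (bq.ot c b) := rfl
  have txyz' : bs.tribr h x y z = bs.act z (bq.ut a b) := by
    rw [txyz, ← hy, ← hz, bs.compat]
  have txyw' : bs.tribr h x y w = bs.act w (bq.ut a c) := by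
    rw [txyw, ← hy, ← hw, bs.compat]
  have txzw' : bs.tribr h x z w = bs.act w (bq.ut b c) := by
    rw [txzw, ← hz, ← hw, bs.compat]
  have s1 : bs.sd h y (bs.tribr h x y z) = bq.ot b a := by rw [txyz, bs.sd_act]
  have s2 : bs.sd h y (bs.tribr h x y w) = bq.ot c a := by rw [txyw, bs.sd_act]
  have s3 : bs.sd h z (bs.tribr h x y z) = bq.ut a b := by rw [txyz', bs.sd_act]
  have s4 : bs.sd h z (bs.tribr h x z w) = bq.ot c b := by rw [txzw, bs.sd_act]
  have s5 : bs.sd h w (bs.tribr h x y w) = bq.ut a c := by rw [txyw', bs.sd_act]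
  have s6 : bs.sd h w (bs.tribr h x z w) = bq.ut b c := by rw [txzw', bs.sd_act]
  constructor
  · show bs.act (bs.tribr h x y z)
        (bq.ot (bs.sd h y (bs.tribr h x y w)) (bs.sd h y (bs.tribr h x y z)))
      = bs.act (bs.tribr h x y z)
        (bq.ot (bs.sd h z (bs.tribr h x z w)) (bs.sd h z (bs.tribr h x y z)))
    rw [s1, s2, s3, s4, bq.ex3]
  · show bs.act (bs.tribr h x y z)
        (bq.ot (bs.sd h z (bs.tribr h x z w)) (bs.sd h z (bs.tribr h x y z)))
      = bs.act (bs.tribr h x y w)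
        (bq.ot (bs.sd h w (bs.tribr h x z w)) (bs.sd h w (bs.tribr h x y w)))
    rw [s3, s4, s5, s6, txyz', txyw', bs.compat, bs.compat, ← hz, ← hw,
      bs.compat, ← bq.ex1]
end

section
/- Let n be a positive integer, J an ideal of the Laurent polynomial ring (ℤ/nℤ)[t^{±1}], and Q = X = (ℤ/nℤ)[t^{±1}]/J, with t denoting the image of the Laurent variable; let a⊲b = ta+(1−t)b be the Alexander quandle operation, regarded as a biquandle with a⊲'b = a, and let x*a = tx+(1−t)a, so that (Q,X) is a shadow quandle. Assume 1−t is a unit in Q, so that X is strongly connected with x↘y = (1−t)⁻¹(−tx+y). Then the corresponding horizontal-tribracket [x,y,z] = y*((x↘z) ⊲' (x↘y)) satisfies [x,y,z] = −tx+ty+z for all x,y,z∈X. -/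
/-- Example 5.4: let `n` be a positive integer, `J` an ideal of `(ℤ/nℤ)[t^{±1}]`, and
`Q = X = (ℤ/nℤ)[t^{±1}]/J` with the Alexander quandle operation `a⊲b = ta+(1-t)b`
(regarded as a biquandle with `a⊲'b = a`) and `x*a = tx+(1-t)a`, so that `(Q,X)` is a
shadow quandle.  If `1-t` is a unit in `Q`, then `X` is strongly connected with
`x↘y = (1-t)⁻¹(-tx+y)`, and the corresponding horizontal-tribracket satisfies
`[x,y,z] = -tx+ty+z`. -/
theorem alexander_corresponding_tribracket (n : ℕ) (hn : 0 < n)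
    (J : Ideal (LaurentPolynomial (ZMod n)))
    (t : LaurentPolynomial (ZMod n) ⧸ J)
    (ht : t = Ideal.Quotient.mk J (LaurentPolynomial.T 1))
    (bq : Biquandle (LaurentPolynomial (ZMod n) ⧸ J))
    (bs : BSet bq (LaurentPolynomial (ZMod n) ⧸ J))
    (hut : ∀ a b, bq.ut a b = t * a + (1 - t) * b)
    (hot : ∀ a b, bq.ot a b = a)
    (hact : ∀ x a, bs.act x a = t * x + (1 - t) * a)
    (hu : IsUnit (1 - t)) :
    ∃ hsc : bs.StronglyConnected,
      (∀ x y, bs.sd hsc x y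
          = (↑hu.unit⁻¹ : LaurentPolynomial (ZMod n) ⧸ J) * (-(t * x) + y)) ∧
      (∀ x y z, bs.tribr hsc x y z = -t * x + t * y + z) := by
  have hinv : ∀ c : LaurentPolynomial (ZMod n) ⧸ J,
      (1 - t) * ((↑hu.unit⁻¹ : LaurentPolynomial (ZMod n) ⧸ J) * c) = c := by
    intro c
    rw [← mul_assoc, hu.mul_val_inv, one_mul]
  have hsc : bs.StronglyConnected := by
    intro x
    constructor
    · intro a b hab
      simp only [hact] at hab
      exact hu.mul_left_cancel (add_left_cancel hab)
    · intro y
      refine ⟨(↑hu.unit⁻¹ : _) * (-(t * x) + y), ?_⟩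
      simp only [hact]
      rw [hinv]; ring
  have hsd : ∀ x y, bs.sd hsc x y
      = (↑hu.unit⁻¹ : LaurentPolynomial (ZMod n) ⧸ J) * (-(t * x) + y) := by
    intro x y
    have h2 : bs.act x ((↑hu.unit⁻¹ : LaurentPolynomial (ZMod n) ⧸ J) * (-(t * x) + y)) = y := by
      rw [hact, hinv]; ring
    have h3 := congrArg (Equiv.ofBijective _ (hsc x)).symm h2
    rw [Equiv.ofBijective_symm_apply_apply] at h3
    exact h3.symm
  refine ⟨hsc, hsd, fun x y z => ?_⟩
  rw [BSet.tribr, hot, hsd, hact, hinv]; ring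
end
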